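/- Let K be a field of characteristic p > 0 with two commuting derivations ∂₀, ∂₁, and let (a,b,c) be an algebraically independent triple over K. Then on the field K(a^ξ : |ξ| ≤ 2) with generators arranged as the triangle a^{(0,0)}=a, a^{(0,1)}=b^p+a, a^{(0,2)}=b^p+a, a^{(1,0)}=b, a^{(1,1)}=b, a^{(2,0)}=c, the differential condition is satisfied: the assignments ∂₀a = b, ∂₁a = b^p + a, ∂₀b = c, ∂₁b = b determine well-defined derivations on K(a,b) into K(a,b,c) whose brackets vanish on K(a), i.e., ∂₀∂₁a = ∂₁∂₀a. -/

import Mathlib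

open IntermediateField

/-- `d` is a derivation on the subset `A` of `M`: additive and Leibniz on `A`. -/
def IsDerivationOn {M : Type*} [Field M] (A : Set M) (d : M → M) : Prop :=
  (∀ x ∈ A, ∀ y ∈ A, d (x + y) = d x + d y) ∧
  (∀ x ∈ A, ∀ y ∈ A, d (x * y) = x * d y + y * d x)

namespace CharPExampleAux

open MvPolynomial

variable {K M : Type*} [Field K] [Field M] [Algebra K M]

/-- Formal derivative with prescribed values `u`, `v` on `X 0`, `X 1`,
evaluated at `(a, b)`. -/
noncomputable def Dp (a b u v : M) (f : MvPolynomial (Fin 2) K) : M :=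
  aeval ![a, b] (pderiv 0 f) * u + aeval ![a, b] (pderiv 1 f) * v

lemma Dp_add (a b u v : M) (f g : MvPolynomial (Fin 2) K) :
    Dp a b u v (f + g) = Dp a b u v f + Dp a b u v g := by
  simp only [Dp, map_add]; ring

lemma Dp_mul (a b u v : M) (f g : MvPolynomial (Fin 2) K) :
    Dp a b u v (f * g) =
      aeval ![a, b] f * Dp a b u v g + aeval ![a, b] g * Dp a b u v f := by
  simp only [Dp, pderiv_mul, map_add, map_mul]; ring

lemma Dp_C (a b u v : M) (r : K) : Dp a b u v (C r) = 0 := by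
  simp [Dp, pderiv_C]

lemma Dp_one (a b u v : M) : Dp a b u v (1 : MvPolynomial (Fin 2) K) = 0 := by
  simp [Dp, pderiv_one]

lemma Dp_X0 (a b u v : M) : Dp a b u v (X 0 : MvPolynomial (Fin 2) K) = u := by
  simp [Dp]

lemma Dp_X1 (a b u v : M) : Dp a b u v (X 1 : MvPolynomial (Fin 2) K) = v := by
  simp [Dp]

open Classical in
/-- The quotient-rule extension of `Dp` to the field generated by `a`, `b`. -/
noncomputable def Dfun (a b u v : M) (x : M) : M :=
  if h : ∃ rs : MvPolynomial (Fin 2) K × MvPolynomial (Fin 2) K,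
      aeval ![a, b] rs.2 ≠ 0 ∧ x = aeval ![a, b] rs.1 / aeval ![a, b] rs.2 then
    (aeval ![a, b] h.choose.2 * Dp a b u v h.choose.1
      - aeval ![a, b] h.choose.1 * Dp a b u v h.choose.2) / (aeval ![a, b] h.choose.2) ^ 2
  else 0

lemma Dfun_spec (a b u v : M)
    (hinj : Function.Injective (aeval (R := K) ![a, b]))
    (r s : MvPolynomial (Fin 2) K) (hs : aeval ![a, b] s ≠ 0) :
    Dfun (K := K) a b u v (aeval ![a, b] r / aeval ![a, b] s) =
      (aeval ![a, b] s * Dp a b u v r - aeval ![a, b] r * Dp a b u v s)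
        / (aeval ![a, b] s) ^ 2 := by
  have hex : ∃ rs : MvPolynomial (Fin 2) K × MvPolynomial (Fin 2) K,
      aeval ![a, b] rs.2 ≠ 0 ∧
      (aeval ![a, b] r / aeval ![a, b] s) = aeval ![a, b] rs.1 / aeval ![a, b] rs.2 :=
    ⟨(r, s), hs, rfl⟩
  unfold Dfun
  rw [dif_pos hex]
  obtain ⟨hs', heq⟩ := hex.choose_spec
  set r' := hex.choose.1
  set s' := hex.choose.2
  have hc : aeval ![a, b] r * aeval ![a, b] s' = aeval ![a, b] r' * aeval ![a, b] s :=
    (div_eq_div_iff hs hs').mp heq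
  have hpoly : r * s' = r' * s := hinj (by rw [map_mul, map_mul]; exact hc)
  have hD : aeval ![a, b] r * Dp a b u v s' + aeval ![a, b] s' * Dp a b u v r
      = aeval ![a, b] r' * Dp a b u v s + aeval ![a, b] s * Dp a b u v r' := by
    have h2 := congrArg (Dp a b u v) hpoly
    rwa [Dp_mul, Dp_mul] at h2
  rw [div_eq_div_iff (pow_ne_zero _ hs') (pow_ne_zero _ hs)]
  linear_combination (-(aeval ![a, b] s * aeval ![a, b] s')) * hD +
    (aeval ![a, b] s * Dp a b u v s' + aeval ![a, b] s' * Dp a b u v s) * hc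

lemma range_pair (a b : M) : ({a, b} : Set M) = Set.range ![a, b] := by
  ext y
  constructor
  · rintro (rfl | rfl)
    exacts [⟨0, rfl⟩, ⟨1, rfl⟩]
  · rintro ⟨i, rfl⟩
    fin_cases i
    · exact Or.inl rfl
    · exact Or.inr rfl

lemma exists_rep {a b x : M} (hx : x ∈ adjoin K {a, b}) :
    ∃ r s : MvPolynomial (Fin 2) K,
      aeval ![a, b] s ≠ 0 ∧ x = aeval ![a, b] r / aeval ![a, b] s := by
  rw [range_pair, mem_adjoin_range_iff] at hx
  obtain ⟨r, s, hrs⟩ := hx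
  by_cases hs : aeval ![a, b] s = 0
  · exact ⟨0, 1, by simp, by simp [hrs, hs]⟩
  · exact ⟨r, s, hs, hrs⟩

lemma aeval_mem {a b : M} (N : IntermediateField K M) (ha : a ∈ N) (hb : b ∈ N)
    (f : MvPolynomial (Fin 2) K) : aeval ![a, b] f ∈ N := by
  induction f using MvPolynomial.induction_on with
  | C r => simpa using N.algebraMap_mem r
  | add f g hf hg => rw [map_add]; exact add_mem hf hg
  | mul_X f i hf =>
      rw [map_mul, aeval_X]
      fin_cases i
      · exact mul_mem hf ha
      · exact mul_mem hf hb

lemma Dfun_isDerivationOn (a b u v : M)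
    (hinj : Function.Injective (aeval (R := K) ![a, b])) :
    IsDerivationOn (adjoin K {a, b} : IntermediateField K M) (Dfun (K := K) a b u v) := by
  constructor
  · intro x hx y hy
    obtain ⟨r, s, hs, rfl⟩ := exists_rep (K := K) hx
    obtain ⟨r', s', hs', rfl⟩ := exists_rep (K := K) hy
    have hss' : aeval ![a, b] (s * s') ≠ 0 := by
      rw [map_mul]; exact mul_ne_zero hs hs'
    have hsum : aeval ![a, b] r / aeval ![a, b] s + aeval ![a, b] r' / aeval ![a, b] s'
        = aeval ![a, b] (r * s' + r' * s) / aeval ![a, b] (s * s') := by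
      rw [map_add, map_mul, map_mul, map_mul, div_add_div _ _ hs hs']
      ring_nf
    rw [hsum, Dfun_spec a b u v hinj _ _ hss', Dfun_spec a b u v hinj _ _ hs,
      Dfun_spec a b u v hinj _ _ hs']
    rw [map_mul] at hss'
    simp only [Dp_add, Dp_mul, map_add, map_mul]
    field_simp
    ring
  · intro x hx y hy
    obtain ⟨r, s, hs, rfl⟩ := exists_rep (K := K) hx
    obtain ⟨r', s', hs', rfl⟩ := exists_rep (K := K) hy
    have hss' : aeval ![a, b] (s * s') ≠ 0 := by
      rw [map_mul]; exact mul_ne_zero hs hs'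
    have hprod : aeval ![a, b] r / aeval ![a, b] s * (aeval ![a, b] r' / aeval ![a, b] s')
        = aeval ![a, b] (r * r') / aeval ![a, b] (s * s') := by
      rw [map_mul, map_mul, div_mul_div_comm]
    rw [hprod, Dfun_spec a b u v hinj _ _ hss', Dfun_spec a b u v hinj _ _ hs,
      Dfun_spec a b u v hinj _ _ hs']
    rw [map_mul] at hss'
    simp only [Dp_mul, map_mul]
    field_simp
    ring

lemma Dfun_mem (a b c u v : M)
    (hinj : Function.Injective (aeval (R := K) ![a, b]))
    (hu : u ∈ adjoin K {a, b, c}) (hv : v ∈ adjoin K {a, b, c}) :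
    ∀ x ∈ adjoin K {a, b}, Dfun (K := K) a b u v x ∈ adjoin K {a, b, c} := by
  intro x hx
  obtain ⟨r, s, hs, rfl⟩ := exists_rep (K := K) hx
  rw [Dfun_spec a b u v hinj _ _ hs]
  have ha : a ∈ adjoin K {a, b, c} := subset_adjoin _ _ (by simp)
  have hb : b ∈ adjoin K {a, b, c} := subset_adjoin _ _ (by simp)
  have hmem : ∀ f : MvPolynomial (Fin 2) K, aeval ![a, b] f ∈ adjoin K {a, b, c} :=
    aeval_mem _ ha hb
  have hDp : ∀ f : MvPolynomial (Fin 2) K, Dp a b u v f ∈ adjoin K {a, b, c} := by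
    intro f
    exact add_mem (mul_mem (hmem _) hu) (mul_mem (hmem _) hv)
  exact div_mem (sub_mem (mul_mem (hmem _) (hDp _)) (mul_mem (hmem _) (hDp _)))
    (pow_mem (hmem _) 2)

lemma Dfun_algebraMap (a b u v : M)
    (hinj : Function.Injective (aeval (R := K) ![a, b])) (k : K) :
    Dfun (K := K) a b u v (algebraMap K M k) = 0 := by
  have h := Dfun_spec a b u v hinj (C k) 1 (by simp)
  simp only [map_one, div_one, one_pow, one_mul, aeval_C, Dp_one, Dp_C] at h
  simpa using h

lemma Dfun_a (a b u v : M)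
    (hinj : Function.Injective (aeval (R := K) ![a, b])) :
    Dfun (K := K) a b u v a = u := by
  have h := Dfun_spec a b u v hinj (X 0) 1 (by simp)
  simp only [map_one, div_one, one_pow, one_mul, aeval_X, Dp_one, Dp_X0,
    Matrix.cons_val_zero] at h
  simpa using h

lemma Dfun_b (a b u v : M)
    (hinj : Function.Injective (aeval (R := K) ![a, b])) :
    Dfun (K := K) a b u v b = v := by
  have h := Dfun_spec a b u v hinj (X 1) 1 (by simp)
  simp only [map_one, div_one, one_pow, one_mul, aeval_X, Dp_one, Dp_X1,
    Matrix.cons_val_one, Matrix.head_cons] at h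
  simpa using h

end CharPExampleAux

open CharPExampleAux MvPolynomial in
/-- Char-`p` example meeting the differential condition: over a field `K` of
characteristic `p > 0`, given `a, b, c` algebraically independent over `K`, the
assignments `∂₀a = b`, `∂₁a = bᵖ + a`, `∂₀b = c`, `∂₁b = b` determine
well-defined derivations on `K(a,b)` into `K(a,b,c)`, vanishing on `K`, whose
brackets vanish at `a`: `∂₀∂₁a = ∂₁∂₀a`. -/
theorem charP_example_differential_condition (K M : Type*) [Field K] [Field M]
    [Algebra K M] (p : ℕ) [Fact p.Prime] [CharP K p] (a b c : M)
    (hind : AlgebraicIndependent K ![a, b, c]) :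
    ∃ d0 d1 : M → M,
      IsDerivationOn (adjoin K {a, b} : IntermediateField K M) d0 ∧
      IsDerivationOn (adjoin K {a, b} : IntermediateField K M) d1 ∧
      (∀ x ∈ adjoin K {a, b}, d0 x ∈ adjoin K {a, b, c}) ∧
      (∀ x ∈ adjoin K {a, b}, d1 x ∈ adjoin K {a, b, c}) ∧
      (∀ x : K, d0 (algebraMap K M x) = 0) ∧
      (∀ x : K, d1 (algebraMap K M x) = 0) ∧
      d0 a = b ∧ d1 a = b ^ p + a ∧ d0 b = c ∧ d1 b = b ∧
      d0 (d1 a) = d1 (d0 a) := by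
  -- `a, b` are algebraically independent
  have h2 : AlgebraicIndependent K ![a, b] := by
    have h := hind.comp ![(0 : Fin 3), 1] (by decide)
    have : (![a, b, c] ∘ ![(0 : Fin 3), 1]) = ![a, b] := by
      funext i; fin_cases i <;> rfl
    rwa [this] at h
  have hinj : Function.Injective (aeval (R := K) ![a, b]) :=
    algebraicIndependent_iff_injective_aeval.mp h2
  have ha3 : a ∈ adjoin K {a, b, c} := subset_adjoin _ _ (by simp)
  have hb3 : b ∈ adjoin K {a, b, c} := subset_adjoin _ _ (by simp)
  have hc3 : c ∈ adjoin K {a, b, c} := subset_adjoin _ _ (by simp)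
  refine ⟨Dfun (K := K) a b b c, Dfun (K := K) a b (b ^ p + a) b,
    Dfun_isDerivationOn a b b c hinj, Dfun_isDerivationOn a b (b ^ p + a) b hinj,
    Dfun_mem a b c b c hinj hb3 hc3,
    Dfun_mem a b c (b ^ p + a) b hinj (add_mem (pow_mem hb3 p) ha3) hb3,
    Dfun_algebraMap a b b c hinj, Dfun_algebraMap a b (b ^ p + a) b hinj,
    Dfun_a a b b c hinj, Dfun_a a b (b ^ p + a) b hinj,
    Dfun_b a b b c hinj, Dfun_b a b (b ^ p + a) b hinj, ?_⟩
  rw [Dfun_a a b (b ^ p + a) b hinj, Dfun_a a b b c hinj,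
    Dfun_b a b (b ^ p + a) b hinj]
  -- now show `Dfun (K := K) a b b c (b ^ p + a) = b`
  have hp0 : (pderiv (0 : Fin 2)) ((X 1 : MvPolynomial (Fin 2) K) ^ p) = 0 := by
    rw [pderiv_pow]; simp
  have hp1 : (pderiv (1 : Fin 2)) ((X 1 : MvPolynomial (Fin 2) K) ^ p) = 0 := by
    rw [pderiv_pow, pderiv_X_self, mul_one]
    have : ((p : ℕ) : MvPolynomial (Fin 2) K) = 0 := by
      have := CharP.cast_eq_zero K p
      rw [← C_eq_coe_nat, this, map_zero]
    rw [this, zero_mul]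
  have h := Dfun_spec a b b c hinj ((X 1) ^ p + X 0) 1 (by simp)
  have hDp : Dp a b b c ((X 1 : MvPolynomial (Fin 2) K) ^ p + X 0) = b := by
    simp [Dp, hp0, hp1]
  simp only [map_one, div_one, one_pow, one_mul, map_add, map_pow, aeval_X,
    Matrix.cons_val_zero, Matrix.cons_val_one, Matrix.head_cons, Dp_one, hDp] at h
  simpa using h
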